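/- (Invariance of the area vector.) Let n ≥ 1, let γ : ℤ → Im ℍ be a closed polygon of period n (γ_{i+n} = γ_i), let r ∈ ℝ, l > 0, and let η : ℤ → Im ℍ be an n-periodic Darboux transform of γ with twist parameter r and distance l. Then the area vectors of γ and η coincide: ∑_{j=1}^{n−1} (γ_j − γ₀) × (γ_{j+1} − γ₀) = ∑_{j=1}^{n−1} (η_j − η₀) × (η_{j+1} − η₀), where for purely imaginary quaternions p, q the cross product is p × q = (1/2)·(p·q − q·p). -/
import Mathlib


open Quaternion

/-- The cross product of purely imaginary quaternions: `p × q = (1/2)(pq − qp)`. -/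
noncomputable def qcross (p q : ℍ[ℝ]) : ℍ[ℝ] :=
  (2 : ℝ)⁻¹ • (p * q - q * p)

lemma qstep (a b u v : ℍ[ℝ]) (r l : ℝ)
    (ha : a.re = 0) (hb : b.re = 0) (hu : u.re = 0) (hv : v.re = 0)
    (huu : u * u = -1)
    (H : v * (-(r : ℍ[ℝ]) + l • u - (b - a)) = (-(r : ℍ[ℝ]) + l • u - (b - a)) * u) :
    qcross (a + l • u) (b + l • v) - qcross a b
      = (qcross b (l • v) - (l * r) • v) - (qcross a (l • u) - (l * r) • u) := by
  have hA : star a = -a := Quaternion.star_eq_neg.mpr ha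
  have hB : star b = -b := Quaternion.star_eq_neg.mpr hb
  have hU : star u = -u := Quaternion.star_eq_neg.mpr hu
  have hV : star v = -v := Quaternion.star_eq_neg.mpr hv
  have Hs : ((r : ℍ[ℝ]) + l • u - (b - a)) * v = u * ((r : ℍ[ℝ]) + l • u - (b - a)) := by
    have h := congrArg star H
    simp only [star_mul, star_sub, star_add, star_neg, Quaternion.star_smul, star_trivial,
      Quaternion.star_coe, hA, hB, hU, hV, smul_neg, neg_mul, mul_neg, neg_neg, neg_sub] at h
    linear_combination (norm := noncomm_ring) h
  simp only [mul_sub, sub_mul, mul_add, add_mul, mul_neg, neg_mul,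
    mul_smul_comm, smul_mul_assoc, Quaternion.mul_coe_eq_smul,
    Quaternion.coe_mul_eq_smul, huu] at H Hs
  simp only [qcross, mul_sub, sub_mul, mul_add, add_mul, mul_neg, neg_mul,
    mul_smul_comm, smul_mul_assoc]
  linear_combination (norm := module) ((2:ℝ)⁻¹ * l) • Hs - ((2:ℝ)⁻¹ * l) • H

lemma area_base (n : ℕ) (hn : 1 ≤ n) (x : ℤ → ℍ[ℝ]) (hper : x (n : ℤ) = x 0) :
    ∑ j ∈ Finset.Ico 1 n, qcross (x j - x 0) (x ((j : ℤ) + 1) - x 0)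
      = ∑ j ∈ Finset.range n, qcross (x j) (x ((j : ℤ) + 1)) := by
  have h0 : ∑ j ∈ Finset.Ico 0 n, qcross (x j - x 0) (x ((j : ℤ) + 1) - x 0)
      = ∑ j ∈ Finset.Ico 1 n, qcross (x j - x 0) (x ((j : ℤ) + 1) - x 0) := by
    rw [Finset.sum_eq_sum_Ico_succ_bot (by omega)]
    simp [qcross]
  rw [← h0, ← Finset.range_eq_Ico]
  have shift : ∑ j ∈ Finset.range n, x ((j : ℤ) + 1) = ∑ j ∈ Finset.range n, x j := by
    have h1 : ∀ j : ℕ, x ((j : ℤ) + 1) = x (((j + 1 : ℕ) : ℤ)) := by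
      intro j; push_cast; ring_nf
    simp only [h1]
    have h2 := Finset.sum_range_succ' (fun k : ℕ => x (k : ℤ)) n
    rw [Finset.sum_range_succ (fun k : ℕ => x (k : ℤ)) n] at h2
    simp only [Nat.cast_zero, hper] at h2
    exact (add_right_cancel h2).symm
  rw [← sub_eq_zero, ← Finset.sum_sub_distrib]
  have hterm : ∀ j ∈ Finset.range n,
      qcross (x j - x 0) (x ((j : ℤ) + 1) - x 0) - qcross (x j) (x ((j : ℤ) + 1))
        = -(qcross (x j) (x 0)) - qcross (x 0) (x ((j : ℤ) + 1)) := by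
    intro j _
    simp only [qcross, mul_sub, sub_mul]
    module
  rw [Finset.sum_congr rfl hterm]
  simp only [qcross, ← Finset.smul_sum, Finset.sum_sub_distrib, Finset.sum_neg_distrib,
    ← Finset.sum_mul, ← Finset.mul_sum, shift]
  module

theorem darboux_preserves_area_vector
    (n : ℕ) (hn : 1 ≤ n)
    (γ η : ℤ → ℍ[ℝ]) (hγim : ∀ i, (γ i).re = 0) (hηim : ∀ i, (η i).re = 0)
    (hγper : ∀ i, γ (i + n) = γ i) (hηper : ∀ i, η (i + n) = η i)
    (r : ℝ) (l : ℝ) (hl : 0 < l)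
    (S : ℤ → ℍ[ℝ]) (hS : ∀ i, S i = γ (i + 1) - γ i)
    (T : ℤ → ℍ[ℝ]) (hT : ∀ i, T i = l⁻¹ • (η i - γ i))
    (hTim : ∀ i, (T i).re = 0) (hTnorm : ∀ i, ‖T i‖ = 1)
    (hTdarboux : ∀ i,
      T (i + 1) * (-(r : ℍ[ℝ]) + l • T i - S i) =
        (-(r : ℍ[ℝ]) + l • T i - S i) * T i) :
    ∑ j ∈ Finset.Ico 1 n, qcross (γ j - γ 0) (γ ((j : ℤ) + 1) - γ 0) =
      ∑ j ∈ Finset.Ico 1 n, qcross (η j - η 0) (η ((j : ℤ) + 1) - η 0) := by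
  -- η i = γ i + l • T i
  have hη : ∀ i, η i = γ i + l • T i := by
    intro i
    rw [hT, smul_smul, mul_inv_cancel₀ hl.ne', one_smul]
    abel
  -- periodicity of T
  have hTper : ∀ i, T (i + n) = T i := by
    intro i; rw [hT, hT, hγper, hηper]
  -- T i * T i = -1
  have hTsq : ∀ i, T i * T i = (-1 : ℍ[ℝ]) := by
    intro i
    have h1 := Quaternion.sq_eq_neg_normSq.mpr (hTim i)
    rw [Quaternion.normSq_eq_norm_mul_self, hTnorm i, one_mul, sq] at h1
    simpa using h1
  -- the step function g
  set g : ℤ → ℍ[ℝ] := fun i => qcross (γ i) (l • T i) - (l * r) • T i with hg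
  have gper : ∀ i, g (i + n) = g i := by
    intro i; simp only [hg, hγper, hTper]
  have step : ∀ i : ℤ,
      qcross (η i) (η (i + 1)) - qcross (γ i) (γ (i + 1)) = g (i + 1) - g i := by
    intro i
    have H := hTdarboux i
    rw [hS] at H
    have := qstep (γ i) (γ (i + 1)) (T i) (T (i + 1)) r l
      (hγim i) (hγim (i + 1)) (hTim i) (hTim (i + 1)) (hTsq i) H
    rw [hη i, hη (i + 1)]
    simpa [hg] using this
  -- closedness at n
  have hγn : γ (n : ℤ) = γ 0 := by have := hγper 0; rwa [zero_add] at this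
  have hηn : η (n : ℤ) = η 0 := by have := hηper 0; rwa [zero_add] at this
  rw [area_base n hn γ hγn, area_base n hn η hηn]
  rw [← sub_eq_zero, ← Finset.sum_sub_distrib]
  have hterm : ∀ j ∈ Finset.range n,
      qcross (γ j) (γ ((j : ℤ) + 1)) - qcross (η j) (η ((j : ℤ) + 1))
        = (fun k : ℕ => g (k : ℤ)) j - (fun k : ℕ => g (k : ℤ)) (j + 1) := by
    intro j _
    have h := step (j : ℤ)
    have h' : qcross (γ j) (γ ((j : ℤ) + 1)) - qcross (η j) (η ((j : ℤ) + 1))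
        = g (j : ℤ) - g ((j : ℤ) + 1) := by
      rw [← neg_sub, h, neg_sub]
    simpa [Nat.cast_add] using h'
  rw [Finset.sum_congr rfl hterm, Finset.sum_range_sub' (fun k : ℕ => g (k : ℤ))]
  have hgn : g (n : ℤ) = g 0 := by have := gper 0; rwa [zero_add] at this
  simp [hgn]
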